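/- The first-order Seiberg–Witten map intertwines the closure of gauge transformations to first order in the noncommutativity parameter θ (equation (commuexp)): for all smooth matrix-valued functions λ₁, λ₂, A₁, …, A_d: ℝᵈ → Mat_N(ℂ) and every real antisymmetric d×d matrix θ, the following exact identity of the θ-linear terms holds: μ( −i[λ₁,λ₂], A ) = ½ Σ_{k,l} θ^{kl} ( ∂_kλ₁ ∂_lλ₂ − ∂_kλ₂ ∂_lλ₁ ) − i[ λ₁, μ(λ₂,A) ] + i[ λ₂, μ(λ₁,A) ] + μ( λ₂, δ_{λ₁}A ) − μ( λ₁, δ_{λ₂}A ), where [x,y] = xy − yx; the right-hand side consists of the first-order part of the star-commutator closure bracket −i(λ̂₁ ⋆ λ̂₂ − λ̂₂ ⋆ λ̂₁) of the mapped gauge parameters λ̂ᵢ = λᵢ + μ(λᵢ,A) together with the Seiberg–Witten corrections evaluated on gauge-transformed fields. -/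

import Mathlib

/- STATEMENT 9: the first-order Seiberg–Witten map intertwines the closure of
gauge transformations to first order in θ (equation (commuexp)):
μ(−i[λ₁,λ₂], A) = ½ Σ θ^{kl}(∂_kλ₁∂_lλ₂ − ∂_kλ₂∂_lλ₁) − i[λ₁, μ(λ₂,A)]
  + i[λ₂, μ(λ₁,A)] + μ(λ₂, δ_{λ₁}A) − μ(λ₁, δ_{λ₂}A). -/

noncomputable section

/-- Smooth Mat_N(ℂ)-valued functions on ℝᵈ (entrywise). -/
abbrev MFun (d N : ℕ) := (Fin d → ℝ) → Fin N → Fin N → ℂ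

/-- Entrywise partial derivative ∂_k f. -/
def mpd {d N : ℕ} (f : MFun d N) (k : Fin d) : MFun d N :=
  fun x i j => fderiv ℝ (fun y => f y i j) x (Pi.single k 1)

/-- Pointwise matrix product. -/
def mmul {d N : ℕ} (f g : MFun d N) : MFun d N :=
  fun x i j => ∑ m, f x i m * g x m j

/-- Matrix commutator [f,g] = fg − gf. -/
def mcomm {d N : ℕ} (f g : MFun d N) : MFun d N :=
  fun x i j => mmul f g x i j - mmul g f x i j

/-- Matrix anticommutator {f,g} = fg + gf. -/
def manti {d N : ℕ} (f g : MFun d N) : MFun d N :=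
  fun x i j => mmul f g x i j + mmul g f x i j

/-- First-order Seiberg–Witten correction to the gauge parameter:
  μ(λ,A) = ¼ Σ_{k,l} θ^{kl} {∂_kλ, A_l}. -/
def mu {d N : ℕ} (θ : Fin d → Fin d → ℝ) (lam : MFun d N)
    (A : Fin d → MFun d N) : MFun d N :=
  fun x i j => (1 / 4 : ℂ) * ∑ k, ∑ l, (θ k l : ℂ) * manti (mpd lam k) (A l) x i j

/-- Ordinary Yang–Mills gauge transformation δ_λA_l = ∂_lλ + i[λ, A_l]. -/
def gvar {d N : ℕ} (lam : MFun d N) (A : Fin d → MFun d N) : Fin d → MFun d N :=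
  fun l x i j => mpd lam l x i j + Complex.I * mcomm lam (A l) x i j

/-! ### Auxiliary lemmas -/

lemma entry_diff {d N : ℕ} {f : MFun d N} (hf : ContDiff ℝ (⊤ : ℕ∞) f)
    (i j : Fin N) : Differentiable ℝ (fun y => f y i j) :=
  ((contDiff_pi.1 (contDiff_pi.1 hf i) j).differentiable (by simp))

lemma mmul_entry_diff {d N : ℕ} {f g : MFun d N} (hf : ContDiff ℝ (⊤ : ℕ∞) f)
    (hg : ContDiff ℝ (⊤ : ℕ∞) g) (i j : Fin N) :
    Differentiable ℝ (fun y => mmul f g y i j) := by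
  unfold mmul
  exact Differentiable.fun_sum fun m _ => ((entry_diff hf i m).mul (entry_diff hg m j))

/-- Product rule for `mpd` on `mmul`. -/
lemma mpd_mmul {d N : ℕ} {f g : MFun d N} (hf : ContDiff ℝ (⊤ : ℕ∞) f)
    (hg : ContDiff ℝ (⊤ : ℕ∞) g) (k : Fin d) (x : Fin d → ℝ) (i j : Fin N) :
    mpd (fun y a b => mmul f g y a b) k x i j
      = mmul (mpd f k) g x i j + mmul f (mpd g k) x i j := by
  unfold mpd mmul
  have hd : ∀ m : Fin N, DifferentiableAt ℝ (fun y => f y i m * g y m j) x :=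
    fun m => ((entry_diff hf i m) x).mul ((entry_diff hg m j) x)
  rw [show (fun y => ∑ m, f y i m * g y m j)
      = (fun y => ∑ m ∈ Finset.univ, f y i m * g y m j) from rfl]
  rw [fderiv_fun_sum (fun m _ => hd m)]
  rw [ContinuousLinearMap.sum_apply]
  rw [← Finset.sum_add_distrib]
  refine Finset.sum_congr rfl fun m _ => ?_
  rw [fderiv_fun_mul ((entry_diff hf i m) x) ((entry_diff hg m j) x)]
  simp [ContinuousLinearMap.add_apply, ContinuousLinearMap.smul_apply, smul_eq_mul]
  ring

/-- Derivative of the entry of `-i[f,g]`. -/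
lemma mpd_neg_I_mcomm {d N : ℕ} {f g : MFun d N} (hf : ContDiff ℝ (⊤ : ℕ∞) f)
    (hg : ContDiff ℝ (⊤ : ℕ∞) g) (k : Fin d) (x : Fin d → ℝ) (i j : Fin N) :
    mpd (fun y a b => -Complex.I * mcomm f g y a b) k x i j
      = -Complex.I * (mmul (mpd f k) g x i j + mmul f (mpd g k) x i j
          - (mmul (mpd g k) f x i j + mmul g (mpd f k) x i j)) := by
  have hfg := mmul_entry_diff hf hg i j
  have hgf := mmul_entry_diff hg hf i j
  have e1 := mpd_mmul hf hg k x i j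
  have e2 := mpd_mmul hg hf k x i j
  unfold mpd at e1 e2 ⊢
  unfold mcomm
  rw [show (fun y => -Complex.I * (mmul f g y i j - mmul g f y i j))
      = (fun y => -Complex.I • ((fun z => mmul f g z i j - mmul g f z i j) y)) from rfl]
  rw [fderiv_fun_const_smul (by exact (hfg x).sub (hgf x)) (-Complex.I)]
  rw [fderiv_fun_sub (hfg x) (hgf x)]
  simp only [ContinuousLinearMap.smul_apply, ContinuousLinearMap.sub_apply, smul_eq_mul]
  rw [e1, e2]

/-- Sum of an antisymmetric weight against a symmetric family vanishes. -/
lemma antisym_sum_eq_zero {d : ℕ} {M : Type*} [AddCommGroup M] [Module ℂ M]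
    (θ : Fin d → Fin d → ℝ) (hθ : ∀ k l, θ k l = -θ l k)
    (D : Fin d → Fin d → M) (hD : ∀ k l, D k l = D l k) :
    ∑ k, ∑ l, (θ k l : ℂ) • D k l = 0 := by
  have h : (∑ k, ∑ l, (θ k l : ℂ) • D k l) = -∑ k, ∑ l, (θ k l : ℂ) • D k l := by
    calc ∑ k, ∑ l, (θ k l : ℂ) • D k l
        = ∑ l, ∑ k, (θ k l : ℂ) • D k l := Finset.sum_comm
      _
        = ∑ l, ∑ k, -((θ l k : ℂ) • D l k) := by
          refine Finset.sum_congr rfl fun l _ => Finset.sum_congr rfl fun k _ => ?_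
          rw [hθ k l, hD k l]; push_cast; rw [neg_smul]
      _ = -∑ l, ∑ k, (θ l k : ℂ) • D l k := by
          simp [Finset.sum_neg_distrib]
      _ = -∑ k, ∑ l, (θ k l : ℂ) • D k l := rfl
  have h2 : (2 : ℂ) • (∑ k, ∑ l, (θ k l : ℂ) • D k l) = 0 := by
    rw [two_smul]; nth_rewrite 2 [h]; simp
  rcases smul_eq_zero.mp h2 with h3 | h3
  · exact absurd h3 two_ne_zero
  · exact h3

/-- Per-pair matrix algebra identity underlying the closure relation. -/
lemma pair_identity {N : ℕ} (L1 L2 Pk Pl Qk Ql Bl : Matrix (Fin N) (Fin N) ℂ) :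
    (1/4:ℂ) • ((-Complex.I) • (Pk*L2 + L1*Qk - Qk*L1 - L2*Pk) * Bl
      + Bl * ((-Complex.I) • (Pk*L2 + L1*Qk - Qk*L1 - L2*Pk)))
  = ((1/2:ℂ) • (Pk*Ql - Qk*Pl)
    - Complex.I • (L1*((1/4:ℂ)•(Qk*Bl + Bl*Qk)) - ((1/4:ℂ)•(Qk*Bl+Bl*Qk))*L1)
    + Complex.I • (L2*((1/4:ℂ)•(Pk*Bl + Bl*Pk)) - ((1/4:ℂ)•(Pk*Bl+Bl*Pk))*L2)
    + (1/4:ℂ) • (Qk*(Pl + Complex.I•(L1*Bl - Bl*L1)) + (Pl + Complex.I•(L1*Bl-Bl*L1))*Qk)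
    - (1/4:ℂ) • (Pk*(Ql + Complex.I•(L2*Bl - Bl*L2)) + (Ql + Complex.I•(L2*Bl-Bl*L2))*Pk))
    + (1/4:ℂ) • (Qk*Pl + Ql*Pk - Pk*Ql - Pl*Qk) := by
  simp only [smul_add, smul_sub, mul_add, add_mul, mul_sub, sub_mul,
    smul_mul_assoc, mul_smul_comm, smul_smul, mul_assoc]
  module

/-- Main matrix-algebra identity. -/
lemma main_matrix (d N : ℕ) (θ : Fin d → Fin d → ℝ) (hθ : ∀ k l, θ k l = -θ l k)
    (L1 L2 : Matrix (Fin N) (Fin N) ℂ) (P Q B : Fin d → Matrix (Fin N) (Fin N) ℂ) :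
    ∑ k, ∑ l, (θ k l : ℂ) • ((1/4:ℂ) •
        ((-Complex.I) • (P k*L2 + L1*Q k - Q k*L1 - L2*P k) * B l
          + B l * ((-Complex.I) • (P k*L2 + L1*Q k - Q k*L1 - L2*P k))))
  = (1/2:ℂ) • (∑ k, ∑ l, (θ k l : ℂ) • (P k * Q l - Q k * P l))
    - Complex.I • (L1 * (∑ k, ∑ l, (θ k l : ℂ) • ((1/4:ℂ) • (Q k * B l + B l * Q k)))
        - (∑ k, ∑ l, (θ k l : ℂ) • ((1/4:ℂ) • (Q k * B l + B l * Q k))) * L1)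
    + Complex.I • (L2 * (∑ k, ∑ l, (θ k l : ℂ) • ((1/4:ℂ) • (P k * B l + B l * P k)))
        - (∑ k, ∑ l, (θ k l : ℂ) • ((1/4:ℂ) • (P k * B l + B l * P k))) * L2)
    + ∑ k, ∑ l, (θ k l : ℂ) • ((1/4:ℂ) • (Q k * (P l + Complex.I • (L1 * B l - B l * L1))
        + (P l + Complex.I • (L1 * B l - B l * L1)) * Q k))
    - ∑ k, ∑ l, (θ k l : ℂ) • ((1/4:ℂ) • (P k * (Q l + Complex.I • (L2 * B l - B l * L2))
        + (Q l + Complex.I • (L2 * B l - B l * L2)) * P k)) := by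
  have hz : ∑ k, ∑ l, (θ k l : ℂ) •
      ((1/4:ℂ) • (Q k*P l + Q l*P k - P k*Q l - P l*Q k)) = 0 :=
    antisym_sum_eq_zero θ hθ _ (fun k l => by module)
  calc ∑ k, ∑ l, (θ k l : ℂ) • ((1/4:ℂ) •
        ((-Complex.I) • (P k*L2 + L1*Q k - Q k*L1 - L2*P k) * B l
          + B l * ((-Complex.I) • (P k*L2 + L1*Q k - Q k*L1 - L2*P k))))
      = ∑ k, ∑ l, (θ k l : ℂ) •
          (((1/2:ℂ) • (P k*Q l - Q k*P l)
    - Complex.I • (L1*((1/4:ℂ)•(Q k*B l + B l*Q k)) - ((1/4:ℂ)•(Q k*B l+B l*Q k))*L1)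
    + Complex.I • (L2*((1/4:ℂ)•(P k*B l + B l*P k)) - ((1/4:ℂ)•(P k*B l+B l*P k))*L2)
    + (1/4:ℂ) • (Q k*(P l + Complex.I•(L1*B l - B l*L1)) + (P l + Complex.I•(L1*B l-B l*L1))*Q k)
    - (1/4:ℂ) • (P k*(Q l + Complex.I•(L2*B l - B l*L2)) + (Q l + Complex.I•(L2*B l-B l*L2))*P k))
    + (1/4:ℂ) • (Q k*P l + Q l*P k - P k*Q l - P l*Q k)) := by
        refine Finset.sum_congr rfl fun k _ => Finset.sum_congr rfl fun l _ => ?_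
        rw [pair_identity]
    _ = (∑ k, ∑ l, (θ k l : ℂ) •
          ((1/2:ℂ) • (P k*Q l - Q k*P l)
    - Complex.I • (L1*((1/4:ℂ)•(Q k*B l + B l*Q k)) - ((1/4:ℂ)•(Q k*B l+B l*Q k))*L1)
    + Complex.I • (L2*((1/4:ℂ)•(P k*B l + B l*P k)) - ((1/4:ℂ)•(P k*B l+B l*P k))*L2)
    + (1/4:ℂ) • (Q k*(P l + Complex.I•(L1*B l - B l*L1)) + (P l + Complex.I•(L1*B l-B l*L1))*Q k)
    - (1/4:ℂ) • (P k*(Q l + Complex.I•(L2*B l - B l*L2)) + (Q l + Complex.I•(L2*B l-B l*L2))*P k)))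
        + ∑ k, ∑ l, (θ k l : ℂ) • ((1/4:ℂ) • (Q k*P l + Q l*P k - P k*Q l - P l*Q k)) := by
        simp only [smul_add, Finset.sum_add_distrib]
    _ = ∑ k, ∑ l, (θ k l : ℂ) •
          ((1/2:ℂ) • (P k*Q l - Q k*P l)
    - Complex.I • (L1*((1/4:ℂ)•(Q k*B l + B l*Q k)) - ((1/4:ℂ)•(Q k*B l+B l*Q k))*L1)
    + Complex.I • (L2*((1/4:ℂ)•(P k*B l + B l*P k)) - ((1/4:ℂ)•(P k*B l+B l*P k))*L2)
    + (1/4:ℂ) • (Q k*(P l + Complex.I•(L1*B l - B l*L1)) + (P l + Complex.I•(L1*B l-B l*L1))*Q k)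
    - (1/4:ℂ) • (P k*(Q l + Complex.I•(L2*B l - B l*L2)) + (Q l + Complex.I•(L2*B l-B l*L2))*P k)) := by
        rw [hz, add_zero]
    _ = _ := by
        simp only [smul_sub, smul_add, Finset.sum_sub_distrib, Finset.sum_add_distrib]
        simp only [mul_add, add_mul, smul_add, smul_sub, Finset.mul_sum, Finset.sum_mul,
          Finset.smul_sum, mul_smul_comm, smul_mul_assoc, smul_smul,
          ← Finset.sum_add_distrib, ← Finset.sum_sub_distrib]
        refine Finset.sum_congr rfl fun k _ => Finset.sum_congr rfl fun l _ => ?_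
        module

theorem SW_first_order_closure
    (d N : ℕ) (θ : Fin d → Fin d → ℝ) (hθ : ∀ k l, θ k l = -θ l k)
    (lam₁ lam₂ : MFun d N) (A : Fin d → MFun d N)
    (h1 : ContDiff ℝ (⊤ : ℕ∞) lam₁) (h2 : ContDiff ℝ (⊤ : ℕ∞) lam₂)
    (hA : ∀ l, ContDiff ℝ (⊤ : ℕ∞) (A l)) :
    ∀ (x : Fin d → ℝ) (i j : Fin N),
      -- μ(−i[λ₁,λ₂], A)
      mu θ (fun y a b => -Complex.I * mcomm lam₁ lam₂ y a b) A x i j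
      = -- ½ Σ_{k,l} θ^{kl}(∂_kλ₁ ∂_lλ₂ − ∂_kλ₂ ∂_lλ₁)
        (1 / 2 : ℂ) * (∑ k, ∑ l, (θ k l : ℂ) *
          (mmul (mpd lam₁ k) (mpd lam₂ l) x i j
            - mmul (mpd lam₂ k) (mpd lam₁ l) x i j))
        -- −i[λ₁, μ(λ₂,A)] + i[λ₂, μ(λ₁,A)]
        - Complex.I * mcomm lam₁ (mu θ lam₂ A) x i j
        + Complex.I * mcomm lam₂ (mu θ lam₁ A) x i j
        -- + μ(λ₂, δ_{λ₁}A) − μ(λ₁, δ_{λ₂}A)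
        + mu θ lam₂ (gvar lam₁ A) x i j
        - mu θ lam₁ (gvar lam₂ A) x i j := by
  intro x i j
  have hmm : ∀ (f g : MFun d N) (a b : Fin N),
      mmul f g x a b = (Matrix.of (f x) * Matrix.of (g x)) a b := by
    intro f g a b; simp [mmul, Matrix.mul_apply]
  have hmu : ∀ (lam : MFun d N) (B : Fin d → MFun d N) (a b : Fin N),
      mu θ lam B x a b
        = (∑ k, ∑ l, (θ k l : ℂ) • ((1/4:ℂ) •
            (Matrix.of (mpd lam k x) * Matrix.of (B l x)
              + Matrix.of (B l x) * Matrix.of (mpd lam k x)))) a b := by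
    intro lam B a b
    simp only [mu, manti, hmm, Matrix.sum_apply, Matrix.smul_apply, Matrix.add_apply,
      smul_eq_mul, Finset.mul_sum]
    exact Finset.sum_congr rfl fun k _ => Finset.sum_congr rfl fun l _ => by ring
  have hmc : ∀ (f g : MFun d N) (a b : Fin N),
      mcomm f g x a b
        = (Matrix.of (f x) * Matrix.of (g x) - Matrix.of (g x) * Matrix.of (f x)) a b := by
    intro f g a b; simp [mcomm, hmm, Matrix.sub_apply]
  have hmtmu : ∀ (lam : MFun d N),
      Matrix.of (mu θ lam A x)
        = ∑ k, ∑ l, (θ k l : ℂ) • ((1/4:ℂ) •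
            (Matrix.of (mpd lam k x) * Matrix.of (A l x)
              + Matrix.of (A l x) * Matrix.of (mpd lam k x))) :=
    fun lam => Matrix.ext fun a b => hmu lam A a b
  have hgv : ∀ (lam : MFun d N) (l : Fin d),
      Matrix.of (gvar lam A l x)
        = Matrix.of (mpd lam l x) + Complex.I •
            (Matrix.of (lam x) * Matrix.of (A l x)
              - Matrix.of (A l x) * Matrix.of (lam x)) := by
    intro lam l
    refine Matrix.ext fun a b => ?_
    simp [gvar, hmc, Matrix.add_apply, Matrix.smul_apply, smul_eq_mul]
  have hC : ∀ k : Fin d,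
      Matrix.of (mpd (fun y a b => -Complex.I * mcomm lam₁ lam₂ y a b) k x)
        = (-Complex.I) • (Matrix.of (mpd lam₁ k x) * Matrix.of (lam₂ x)
            + Matrix.of (lam₁ x) * Matrix.of (mpd lam₂ k x)
            - Matrix.of (mpd lam₂ k x) * Matrix.of (lam₁ x)
            - Matrix.of (lam₂ x) * Matrix.of (mpd lam₁ k x)) := by
    intro k
    refine Matrix.ext fun a b => ?_
    have := mpd_neg_I_mcomm h1 h2 k x a b
    simp only [Matrix.of_apply] at this ⊢
    rw [this]
    simp only [hmm, Matrix.smul_apply, Matrix.sub_apply, Matrix.add_apply, smul_eq_mul]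
    ring
  calc mu θ (fun y a b => -Complex.I * mcomm lam₁ lam₂ y a b) A x i j
      = (∑ k, ∑ l, (θ k l : ℂ) • ((1/4:ℂ) •
          (Matrix.of (mpd (fun y a b => -Complex.I * mcomm lam₁ lam₂ y a b) k x)
              * Matrix.of (A l x)
            + Matrix.of (A l x)
              * Matrix.of (mpd (fun y a b => -Complex.I * mcomm lam₁ lam₂ y a b) k x)))) i j :=
        hmu _ A i j
    _ = (∑ k, ∑ l, (θ k l : ℂ) • ((1/4:ℂ) •
          ((-Complex.I) • (Matrix.of (mpd lam₁ k x) * Matrix.of (lam₂ x)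
              + Matrix.of (lam₁ x) * Matrix.of (mpd lam₂ k x)
              - Matrix.of (mpd lam₂ k x) * Matrix.of (lam₁ x)
              - Matrix.of (lam₂ x) * Matrix.of (mpd lam₁ k x)) * Matrix.of (A l x)
            + Matrix.of (A l x) *
              ((-Complex.I) • (Matrix.of (mpd lam₁ k x) * Matrix.of (lam₂ x)
              + Matrix.of (lam₁ x) * Matrix.of (mpd lam₂ k x)
              - Matrix.of (mpd lam₂ k x) * Matrix.of (lam₁ x)
              - Matrix.of (lam₂ x) * Matrix.of (mpd lam₁ k x)))))) i j := by
        simp only [hC]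
    _ = ((1/2:ℂ) • (∑ k, ∑ l, (θ k l : ℂ) •
            (Matrix.of (mpd lam₁ k x) * Matrix.of (mpd lam₂ l x)
              - Matrix.of (mpd lam₂ k x) * Matrix.of (mpd lam₁ l x)))
        - Complex.I • (Matrix.of (lam₁ x) * (∑ k, ∑ l, (θ k l : ℂ) • ((1/4:ℂ) •
              (Matrix.of (mpd lam₂ k x) * Matrix.of (A l x)
                + Matrix.of (A l x) * Matrix.of (mpd lam₂ k x))))
            - (∑ k, ∑ l, (θ k l : ℂ) • ((1/4:ℂ) •
              (Matrix.of (mpd lam₂ k x) * Matrix.of (A l x)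
                + Matrix.of (A l x) * Matrix.of (mpd lam₂ k x)))) * Matrix.of (lam₁ x))
        + Complex.I • (Matrix.of (lam₂ x) * (∑ k, ∑ l, (θ k l : ℂ) • ((1/4:ℂ) •
              (Matrix.of (mpd lam₁ k x) * Matrix.of (A l x)
                + Matrix.of (A l x) * Matrix.of (mpd lam₁ k x))))
            - (∑ k, ∑ l, (θ k l : ℂ) • ((1/4:ℂ) •
              (Matrix.of (mpd lam₁ k x) * Matrix.of (A l x)
                + Matrix.of (A l x) * Matrix.of (mpd lam₁ k x)))) * Matrix.of (lam₂ x))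
        + ∑ k, ∑ l, (θ k l : ℂ) • ((1/4:ℂ) •
            (Matrix.of (mpd lam₂ k x) * (Matrix.of (mpd lam₁ l x)
                + Complex.I • (Matrix.of (lam₁ x) * Matrix.of (A l x)
                  - Matrix.of (A l x) * Matrix.of (lam₁ x)))
              + (Matrix.of (mpd lam₁ l x)
                + Complex.I • (Matrix.of (lam₁ x) * Matrix.of (A l x)
                  - Matrix.of (A l x) * Matrix.of (lam₁ x))) * Matrix.of (mpd lam₂ k x)))
        - ∑ k, ∑ l, (θ k l : ℂ) • ((1/4:ℂ) •
            (Matrix.of (mpd lam₁ k x) * (Matrix.of (mpd lam₂ l x)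
                + Complex.I • (Matrix.of (lam₂ x) * Matrix.of (A l x)
                  - Matrix.of (A l x) * Matrix.of (lam₂ x)))
              + (Matrix.of (mpd lam₂ l x)
                + Complex.I • (Matrix.of (lam₂ x) * Matrix.of (A l x)
                  - Matrix.of (A l x) * Matrix.of (lam₂ x))) * Matrix.of (mpd lam₁ k x)))) i j := by
        rw [main_matrix d N θ hθ (Matrix.of (lam₁ x)) (Matrix.of (lam₂ x))
          (fun k => Matrix.of (mpd lam₁ k x)) (fun k => Matrix.of (mpd lam₂ k x))
          (fun l => Matrix.of (A l x))]
    _ = _ := by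
        rw [hmc lam₁ (mu θ lam₂ A) i j, hmc lam₂ (mu θ lam₁ A) i j,
          hmu lam₂ (gvar lam₁ A) i j, hmu lam₁ (gvar lam₂ A) i j]
        simp only [hmtmu, hgv, hmm, Matrix.add_apply, Matrix.sub_apply, Matrix.smul_apply,
          Matrix.sum_apply, smul_eq_mul, Finset.mul_sum]
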